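/- If H is a subgraph of a graph G and X is a set of vertices of H, then the partial burning number of X in G is at most the partial burning number of X in H, which in turn is at most the partial burning number of X in G plus the number of edges of G minus the number of edges of H. -/

import Mathlib

open SimpleGraph

/-- The set of vertices burned after `t` rounds of the burning process on `G`,
where `s i` is the source of fire chosen in round `i + 1`. -/
def burnSet {V : Type*} (G : SimpleGraph V) (s : ℕ → V) : ℕ → Set V
  | 0 => ∅
  | t + 1 => burnSet G s t ∪ {w | ∃ u ∈ burnSet G s t, G.Adj u w} ∪ {s t}

/-- The partial burning number `b(G, S)`: the least number of rounds needed to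
burn every vertex of `S`. -/
noncomputable def pburn {V : Type*} (G : SimpleGraph V) (S : Set V) : ℕ :=
  sInf {r | ∃ s : ℕ → V, S ⊆ burnSet G s r}

/-- The burning number `b(G)`. -/
noncomputable def burn {V : Type*} (G : SimpleGraph V) : ℕ :=
  pburn G Set.univ

/-- The ball of radius `t` around `v` in graph distance. -/
def gball {V : Type*} (G : SimpleGraph V) (v : V) (t : ℕ) : Set V :=
  {w | G.dist v w ≤ t}

/-- The `m × n` Cartesian grid `P_m □ P_n`; the first coordinate is the height (row). -/
def gridGraph (m n : ℕ) : SimpleGraph (Fin m × Fin n) :=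
  (pathGraph m) □ (pathGraph n)

lemma burnSet_subset_succ {V : Type*} (G : SimpleGraph V) (s : ℕ → V) (t : ℕ) :
    burnSet G s t ⊆ burnSet G s (t + 1) := fun _ hx => Or.inl (Or.inl hx)

lemma burnSet_mono {V : Type*} (G : SimpleGraph V) (s : ℕ → V) {t t' : ℕ} (h : t ≤ t') :
    burnSet G s t ⊆ burnSet G s t' := by
  induction h with
  | refl => exact subset_rfl
  | step _ ih => exact ih.trans (burnSet_subset_succ G s _)

lemma source_mem_burnSet {V : Type*} (G : SimpleGraph V) (s : ℕ → V) {i t : ℕ} (h : i < t) :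
    s i ∈ burnSet G s t :=
  burnSet_mono G s h (Or.inr rfl)

lemma exists_cover {V : Type*} [Fintype V] [Nonempty V] (G : SimpleGraph V) (S : Set V) :
    ∃ r : ℕ, ∃ s : ℕ → V, S ⊆ burnSet G s r := by
  classical
  let e := Fintype.equivFin V
  refine ⟨Fintype.card V,
    fun i => if h : i < Fintype.card V then e.symm ⟨i, h⟩ else Classical.arbitrary V, ?_⟩
  intro v _
  have h : ((e v : ℕ)) < Fintype.card V := (e v).isLt
  have := source_mem_burnSet G
    (fun i => if h : i < Fintype.card V then e.symm ⟨i, h⟩ else Classical.arbitrary V) h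
  simpa [h] using this

lemma burnSet_coe_subset {V : Type*} (G : SimpleGraph V) (H : G.Subgraph)
    (s' : ℕ → H.verts) (t : ℕ) :
    ∀ x : H.verts, x ∈ burnSet H.coe s' t → (x : V) ∈ burnSet G (fun i => (s' i : V)) t := by
  induction t with
  | zero => intro x hx; exact absurd hx (by simp [burnSet])
  | succ t ih =>
    intro x hx
    rcases hx with (hx | ⟨u, hu, hadj⟩) | hx
    · exact Or.inl (Or.inl (ih x hx))
    · exact Or.inl (Or.inr ⟨u, ih u hu, H.adj_sub hadj⟩)
    · exact Or.inr (congrArg Subtype.val (show x = s' t from hx))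
/-- If `H` is a subgraph of `G` and `X ⊆ V(H)`, then
`b(G, X) ≤ b(H, X) ≤ b(G, X) + |E(G)| - |E(H)|`. -/
theorem pburn_subgraph {V : Type*} [Fintype V] (G : SimpleGraph V) (H : G.Subgraph)
    (X : Set V) (hX : X ⊆ H.verts) :
    pburn G X ≤ pburn H.coe {x : H.verts | (x : V) ∈ X} ∧
      pburn H.coe {x : H.verts | (x : V) ∈ X} ≤
        pburn G X + (G.edgeSet.ncard - H.edgeSet.ncard) := by
  classical
  set X' : Set H.verts := {x : H.verts | (x : V) ∈ X} with hX'
  by_cases hne : Nonempty H.verts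
  case neg =>
    have hXe : X = ∅ := Set.eq_empty_of_forall_notMem fun x hx => hne ⟨⟨x, hX hx⟩⟩
    have hH0 : pburn H.coe X' = 0 := by
      have he : {r | ∃ s' : ℕ → H.verts, X' ⊆ burnSet H.coe s' r} = ∅ :=
        Set.eq_empty_of_forall_notMem fun r ⟨s', _⟩ => hne ⟨s' 0⟩
      rw [pburn, he, Nat.sInf_empty]
    have hG0 : pburn G X = 0 := by
      by_cases hV : Nonempty V
      · have h0 : 0 ∈ {r | ∃ s : ℕ → V, X ⊆ burnSet G s r} :=
          ⟨fun _ => Classical.arbitrary V, by rw [hXe]; exact Set.empty_subset _⟩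
        exact Nat.le_antisymm (Nat.sInf_le h0) (Nat.zero_le _)
      · have he : {r | ∃ s : ℕ → V, X ⊆ burnSet G s r} = ∅ :=
          Set.eq_empty_of_forall_notMem fun r ⟨s, _⟩ => hV ⟨s 0⟩
        rw [pburn, he, Nat.sInf_empty]
    rw [hH0, hG0]; exact ⟨le_rfl, Nat.zero_le _⟩
  case pos =>
    haveI : Nonempty V := ⟨((Classical.arbitrary H.verts : H.verts) : V)⟩
    haveI : Fintype H.verts := Fintype.ofFinite _
    constructor
    · obtain ⟨r₀, s₀, hs₀⟩ := exists_cover H.coe X'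
      obtain ⟨s', hs'⟩ :=
        (Nat.sInf_mem (⟨r₀, s₀, hs₀⟩ :
          {r | ∃ s' : ℕ → H.verts, X' ⊆ burnSet H.coe s' r}.Nonempty))
      exact Nat.sInf_le ⟨fun i => (s' i : V), fun x hx =>
        burnSet_coe_subset G H s' _ ⟨x, hX hx⟩
          (hs' (show (⟨x, hX hx⟩ : H.verts) ∈ X' from hx))⟩
    · set r := pburn G X with hr
      obtain ⟨r₀, s₀, hs₀⟩ := exists_cover G X
      obtain ⟨s, hs⟩ :=
        (Nat.sInf_mem (⟨r₀, s₀, hs₀⟩ : {r | ∃ s : ℕ → V, X ⊆ burnSet G s r}.Nonempty) :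
          ∃ s : ℕ → V, X ⊆ burnSet G s r)
      set τ : V → ℕ := fun v => sInf {t | v ∈ burnSet G s t} with hτ
      have hτ_le : ∀ {v t}, v ∈ burnSet G s t → τ v ≤ t := fun h => Nat.sInf_le h
      have hτ_mem : ∀ {v t}, v ∈ burnSet G s t → v ∈ burnSet G s (τ v) :=
        fun {v t} h => Nat.sInf_mem (s := {t | v ∈ burnSet G s t}) ⟨t, h⟩
      set D : Set V := {w | ∃ x, G.Adj x w ∧ ¬ H.Adj x w ∧ τ x < τ w} with hD
      set Dv : Set V := D ∩ H.verts with hDv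
      have hDvf : Dv.Finite := Set.toFinite _
      set L : List V := hDvf.toFinset.toList with hL
      have hLmem : ∀ v ∈ L, v ∈ Dv := fun v hv => hDvf.mem_toFinset.mp (Finset.mem_toList.mp hv)
      set m := L.length with hm
      set s' : ℕ → H.verts := fun i =>
        if h : i < m then ⟨L.get ⟨i, h⟩, (hLmem _ (L.get_mem _)).2⟩
        else if h2 : s (i - m) ∈ H.verts then ⟨s (i - m), h2⟩ else Classical.arbitrary H.verts
        with hs'def
      have key : ∀ t (x : H.verts), (x : V) ∈ burnSet G s t → x ∈ burnSet H.coe s' (t + m) := by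
        intro t
        induction t with
        | zero => intro x hx; exact absurd hx (by simp [burnSet])
        | succ t ih =>
          intro x hx
          rw [show t + 1 + m = t + m + 1 from by omega]
          by_cases hB : (x : V) ∈ burnSet G s t
          · exact burnSet_subset_succ _ _ _ (ih x hB)
          rcases hx with (hx | ⟨u, hu, hadj⟩) | hx
          · exact absurd hx hB
          · by_cases hH2 : H.Adj u x
            · exact Or.inl (Or.inr ⟨⟨u, H.edge_vert hH2⟩, ih _ hu,
                (SimpleGraph.Subgraph.coe_adj ..).mpr hH2⟩)
            · have hτx : τ u < τ (x : V) := by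
                refine lt_of_le_of_lt (hτ_le hu) ?_
                by_contra hc
                push_neg at hc
                exact hB (burnSet_mono G s hc (hτ_mem (show (x : V) ∈ burnSet G s (t + 1) from Or.inl (Or.inr ⟨u, hu, hadj⟩))))
              have hxD : (x : V) ∈ Dv := ⟨⟨u, hadj, hH2, hτx⟩, x.2⟩
              have hxL : (x : V) ∈ L := Finset.mem_toList.mpr (hDvf.mem_toFinset.mpr hxD)
              obtain ⟨j, hj⟩ := List.mem_iff_get.mp hxL
              have hsj : s' (j : ℕ) = x := by
                simp only [hs'def]
                rw [dif_pos (show (j : ℕ) < m from j.isLt)]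
                exact Subtype.ext (by simpa using hj)
              have hsrc := source_mem_burnSet H.coe s'
                (show (j : ℕ) < t + m + 1 from by have := j.isLt; omega)
              rw [hsj] at hsrc; exact hsrc
          · have hxeq : (x : V) = s t := hx
            have hst : s t ∈ H.verts := hxeq ▸ x.2
            have hsj : s' (m + t) = x := by
              simp only [hs'def]
              rw [dif_neg (show ¬ (m + t < m) from by omega)]
              rw [show m + t - m = t from by omega, dif_pos hst]
              exact Subtype.ext hxeq.symm
            have hsrc := source_mem_burnSet H.coe s'
              (show m + t < t + m + 1 from by omega)
            rw [hsj] at hsrc; exact hsrc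
      have hle : pburn H.coe X' ≤ r + m :=
        Nat.sInf_le ⟨s', fun x hx => key r x (hs hx)⟩
      have hDle : D.ncard ≤ (G.edgeSet \ H.edgeSet).ncard := by
        have hch : ∀ w ∈ D, ∃ x, G.Adj x w ∧ ¬ H.Adj x w ∧ τ x < τ w := fun w hw => hw
        choose f hf1 hf2 hf3 using hch
        refine Set.ncard_le_ncard_of_injOn
          (fun w => if h : w ∈ D then s(f w h, w) else s(w, w)) ?_ ?_ (Set.toFinite _)
        · intro w hw
          show (if h : w ∈ D then s(f w h, w) else s(w, w)) ∈ G.edgeSet \ H.edgeSet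
          rw [dif_pos hw]
          exact ⟨(SimpleGraph.mem_edgeSet G).mpr (hf1 w hw),
            fun hmem => hf2 w hw ((SimpleGraph.Subgraph.mem_edgeSet).mp hmem)⟩
        · intro w1 h1 w2 h2 he
          have he' : s(f w1 h1, w1) = s(f w2 h2, w2) := by
            have e1 : (fun w => if h : w ∈ D then s(f w h, w) else s(w, w)) w1 = s(f w1 h1, w1) := dif_pos h1
            have e2 : (fun w => if h : w ∈ D then s(f w h, w) else s(w, w)) w2 = s(f w2 h2, w2) := dif_pos h2
            rw [← e1, ← e2]; exact he
          clear he; rename' he' => he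
          rcases Sym2.eq_iff.mp he with ⟨hx2, hw⟩ | ⟨hx2, hw⟩
          · exact hw
          · exfalso
            have a := hf3 w1 h1
            have b := hf3 w2 h2
            rw [hx2] at a
            rw [← hw] at b
            exact lt_irrefl _ (a.trans b)
      have hmk : m ≤ G.edgeSet.ncard - H.edgeSet.ncard := by
        have h1 : m = Dv.ncard := by
          rw [hm, hL, Finset.length_toList, Set.ncard_eq_toFinset_card Dv hDvf]
        have h2 : Dv.ncard ≤ D.ncard :=
          Set.ncard_le_ncard Set.inter_subset_left (Set.toFinite _)
        have h3 : (G.edgeSet \ H.edgeSet).ncard = G.edgeSet.ncard - H.edgeSet.ncard :=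
          Set.ncard_diff H.edgeSet_subset (Set.toFinite _)
        omega
      omega
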